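/- For complex s with Re(s) > 0, complex a with Re(a) > 0, and complex z with |z| < 1, one has ∑_{n≥0} z^n/(n+a)^s = (1/Γ(s)) ∫_0^∞ t^{s-1} e^{-a t}/(1 - z e^{-t}) dt. -/

import Mathlib

open MeasureTheory Set Filter Metric
open Complex

private lemma lerch_contOn (c w : ℂ) :
    ContinuousOn (fun t : ℝ ↦ (t : ℂ) ^ c * Complex.exp (-w * t)) (Set.Ioi 0) := by
  apply ContinuousOn.mul
  · exact (Complex.continuous_ofReal.continuousOn.cpow_const
      (fun x hx ↦ Complex.ofReal_mem_slitPlane.2 hx))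
  · exact (Complex.continuous_exp.comp
      ((continuous_const.mul Complex.continuous_ofReal))).continuousOn

private lemma lerch_norm (c w : ℂ) {t : ℝ} (ht : 0 < t) :
    ‖(t : ℂ) ^ c * Complex.exp (-w * t)‖ = t ^ c.re * Real.exp (-w.re * t) := by
  rw [norm_mul, Complex.norm_cpow_eq_rpow_re_of_pos ht, Complex.norm_exp]
  congr 2
  simp [Complex.mul_re]

private lemma lerch_integrable (c w : ℂ) (hc : 0 < c.re + 1) (hw : 0 < w.re) :
    IntegrableOn (fun t : ℝ ↦ (t : ℂ) ^ c * Complex.exp (-w * t)) (Set.Ioi 0) := by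
  have hbound : IntegrableOn (fun t : ℝ ↦ t ^ c.re * Real.exp (-w.re * t)) (Set.Ioi 0) := by
    have := integrableOn_rpow_mul_exp_neg_mul_rpow (p := 1) (s := c.re) (b := w.re)
      (by linarith) zero_lt_one hw
    refine this.congr_fun (fun t ht ↦ ?_) measurableSet_Ioi
    simp only [Real.rpow_one]
  refine Integrable.mono' hbound
    ((lerch_contOn c w).aestronglyMeasurable measurableSet_Ioi) ?_
  filter_upwards [ae_restrict_mem measurableSet_Ioi] with t ht
  rw [lerch_norm c w ht]

/-- The Gamma integral with a complex scaling parameter of positive real part. -/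
private lemma lerch_gamma_integral (s : ℂ) (hs : 0 < s.re) :
    ∀ w : ℂ, 0 < w.re →
      ∫ t in Set.Ioi (0 : ℝ), (t : ℂ) ^ (s - 1) * Complex.exp (-w * t) =
        Complex.Gamma s * w ^ (-s) := by
  have hs1 : 0 < (s - 1).re + 1 := by
    simp only [Complex.sub_re, Complex.one_re]; linarith
  set U : Set ℂ := {w | 0 < w.re} with hUdef
  have hU : IsOpen U := isOpen_lt continuous_const Complex.continuous_re
  set f : ℂ → ℂ := fun w ↦ ∫ t in Set.Ioi (0 : ℝ), (t : ℂ) ^ (s - 1) * Complex.exp (-w * t)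
    with hf_def
  set g : ℂ → ℂ := fun w ↦ Complex.Gamma s * w ^ (-s) with hg_def
  -- f is differentiable on U
  have hf : DifferentiableOn ℂ f U := by
    intro w₀ hw₀
    have hw₀re : 0 < w₀.re := hw₀
    set ε : ℝ := w₀.re / 2 with hε_def
    have hε : 0 < ε := by positivity
    have key := hasDerivAt_integral_of_dominated_loc_of_deriv_le (μ := volume.restrict (Ioi 0))
      (F := fun w t ↦ (t : ℂ) ^ (s - 1) * Complex.exp (-w * t))
      (F' := fun w t ↦ ((t : ℂ) ^ (s - 1) * Complex.exp (-w * t)) * (-t))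
      (x₀ := w₀) (bound := fun t : ℝ ↦ t ^ s.re * Real.exp (-ε * t)) (ball_mem_nhds w₀ hε)
      (Filter.Eventually.of_forall fun w ↦
        ((lerch_contOn (s - 1) w).aestronglyMeasurable measurableSet_Ioi))
      (lerch_integrable (s - 1) w₀ hs1 hw₀re)
      ((((lerch_contOn (s - 1) w₀).mul
        (Complex.continuous_ofReal.continuousOn.neg)).aestronglyMeasurable measurableSet_Ioi))
      ?_ ?_ ?_
    · exact key.2.differentiableAt.differentiableWithinAt
    · -- bound
      filter_upwards [ae_restrict_mem measurableSet_Ioi] with t ht w hw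
      have hwre : ε ≤ w.re := by
        have h1 : |(w - w₀).re| ≤ ‖w - w₀‖ := Complex.abs_re_le_norm _
        rw [mem_ball, Complex.dist_eq] at hw
        have := abs_le.mp (h1.trans hw.le)
        simp only [Complex.sub_re] at this
        linarith [this.1]
      rw [norm_mul, lerch_norm (s - 1) w ht]
      have htnorm : ‖(-t : ℂ)‖ = t := by
        rw [← Complex.ofReal_neg, Complex.norm_real, Real.norm_eq_abs, abs_neg,
          abs_of_pos ht]
      rw [htnorm]
      have h2 : t ^ (s - 1).re * Real.exp (-w.re * t) * t
          = t ^ s.re * Real.exp (-w.re * t) := by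
        rw [mul_right_comm, ← Real.rpow_add_one ht.ne']
        congr 2
        simp [Complex.sub_re]
      rw [h2]
      have ht' : (0:ℝ) < t := ht
      exact mul_le_mul_of_nonneg_left (Real.exp_le_exp.2 (by nlinarith))
        (Real.rpow_nonneg ht'.le _)
    · -- bound integrable
      have := integrableOn_rpow_mul_exp_neg_mul_rpow (p := 1) (s := s.re) (b := ε)
        (by linarith) zero_lt_one hε
      refine this.congr_fun (fun t ht ↦ ?_) measurableSet_Ioi
      simp only [Real.rpow_one]
    · -- differentiability of integrand in w
      filter_upwards [ae_restrict_mem measurableSet_Ioi] with t ht w hw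
      have h1 : HasDerivAt (fun w : ℂ ↦ -w * (t : ℂ)) (-t) w := by
        simpa using ((hasDerivAt_id w).neg.mul_const (t : ℂ))
      have h2 := h1.cexp
      have h3 := h2.const_mul ((t : ℂ) ^ (s - 1))
      exact h3.congr_deriv (by ring)
  -- g is differentiable on U
  have hg : DifferentiableOn ℂ g U := by
    intro w hw
    refine DifferentiableAt.differentiableWithinAt ?_
    exact ((Complex.hasStrictDerivAt_cpow_const (Or.inl hw)).hasDerivAt.differentiableAt).const_mul _
  have hfa : AnalyticOnNhd ℂ f U := hf.analyticOnNhd hU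
  have hga : AnalyticOnNhd ℂ g U := hg.analyticOnNhd hU
  have hUconn : IsPreconnected U := (convex_halfSpace_re_gt 0).isPreconnected
  have h1U : (1 : ℂ) ∈ U := by simp [hUdef]
  -- equality on positive reals
  have h_eq : ∀ r : ℝ, 0 < r → f r = g r := by
    intro r hr
    have := Complex.integral_cpow_mul_exp_neg_mul_Ioi hs hr
    simp only [hf_def, hg_def, neg_mul]
    rw [this, mul_comm]
    congr 1
    rw [one_div, inv_cpow, cpow_neg]
    rw [Complex.arg_ofReal_of_nonneg hr.le]
    exact (Real.pi_ne_zero).symm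
  -- frequently equal near 1
  have hfreq : ∃ᶠ w in nhdsWithin 1 {(1 : ℂ)}ᶜ, f w = g w := by
    have htend : Tendsto (fun n : ℕ ↦ ((1 + (n + 1 : ℝ)⁻¹ : ℝ) : ℂ)) atTop
        (nhdsWithin 1 {(1 : ℂ)}ᶜ) := by
      rw [tendsto_nhdsWithin_iff]
      constructor
      · have h0 : Tendsto (fun n : ℕ ↦ ((n : ℝ) + 1)⁻¹) atTop (nhds 0) := by
          simpa only [one_div] using tendsto_one_div_add_atTop_nhds_zero_nat (𝕜 := ℝ)
        have h1 := (tendsto_const_nhds (x := (1:ℝ)) (f := atTop (α := ℕ))).add h0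
        rw [add_zero] at h1
        have h2 := (Complex.continuous_ofReal.tendsto 1).comp h1
        simpa [Function.comp_def] using h2
      · refine Filter.Eventually.of_forall fun n ↦ ?_
        simp only [mem_compl_iff, mem_singleton_iff]
        intro h
        have : (1 + (n + 1 : ℝ)⁻¹ : ℝ) = 1 := by exact_mod_cast h
        have hpos : 0 < (n + 1 : ℝ)⁻¹ := by positivity
        linarith
    refine htend.frequently (Filter.Eventually.of_forall fun n ↦ ?_).frequently
    exact h_eq _ (by positivity)
  have := hfa.eqOn_of_preconnected_of_frequently_eq hga hUconn h1U hfreq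
  exact fun w hw ↦ this hw

theorem lerch_integral_repr (s a z : ℂ) (hs : 0 < s.re) (ha : 0 < a.re) (hz : ‖z‖ < 1) :
    ∑' n : ℕ, z ^ n / ((n : ℂ) + a) ^ s =
      (1 / Complex.Gamma s) *
        ∫ t in Set.Ioi (0 : ℝ),
          (t : ℂ) ^ (s - 1) * Complex.exp (-a * t) / (1 - z * Complex.exp (-(t : ℂ))) := by
  have hs1 : 0 < (s - 1).re + 1 := by
    simp only [Complex.sub_re, Complex.one_re]; linarith
  set F : ℕ → ℝ → ℂ := fun n t ↦ ((t : ℂ) ^ (s - 1) * Complex.exp (-((n : ℂ) + a) * t)) * z ^ n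
    with hF_def
  have hna : ∀ n : ℕ, 0 < ((n : ℂ) + a).re := by
    intro n
    simp only [Complex.add_re, Complex.natCast_re]
    positivity
  have hF_int : ∀ n : ℕ, Integrable (F n) (volume.restrict (Ioi 0)) := fun n ↦
    (lerch_integrable (s - 1) ((n : ℂ) + a) hs1 (hna n)).mul_const _
  -- summability of integrals of norms
  have hF_norm : ∀ n : ℕ, ∫ t in Set.Ioi (0 : ℝ), ‖F n t‖ =
      (1 / ((n : ℝ) + a.re)) ^ s.re * Real.Gamma s.re * ‖z‖ ^ n := by
    intro n
    have h1 : ∀ t ∈ Ioi (0 : ℝ), ‖F n t‖ =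
        t ^ (s.re - 1) * Real.exp (-(((n : ℝ) + a.re) * t)) * ‖z‖ ^ n := by
      intro t ht
      rw [hF_def]
      simp only
      rw [norm_mul, lerch_norm (s - 1) _ ht, Complex.sub_re, Complex.one_re,
        Complex.add_re, Complex.natCast_re, neg_mul]
      congr 1
      simp [norm_pow]
    rw [setIntegral_congr_fun measurableSet_Ioi h1,
      MeasureTheory.integral_mul_const,
      Real.integral_rpow_mul_exp_neg_mul_Ioi hs (by positivity : (0:ℝ) < (n : ℝ) + a.re)]
  have hsum : Summable fun n : ℕ ↦ ∫ t in Set.Ioi (0 : ℝ), ‖F n t‖ := by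
    have : Summable fun n : ℕ ↦ ((1 / a.re) ^ s.re * Real.Gamma s.re) * ‖z‖ ^ n :=
      (summable_geometric_of_lt_one (by positivity) hz).mul_left _
    refine this.of_nonneg_of_le (fun n ↦ ?_) (fun n ↦ ?_)
    · rw [hF_norm n]; positivity
    · rw [hF_norm n]
      refine mul_le_mul_of_nonneg_right (mul_le_mul_of_nonneg_right ?_
        (Real.Gamma_nonneg_of_nonneg hs.le)) (by positivity)
      exact Real.rpow_le_rpow (by positivity)
        (by rw [div_le_div_iff₀ (by positivity) ha]; nlinarith [Nat.cast_nonneg (α := ℝ) n])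
        hs.le
  have key := MeasureTheory.hasSum_integral_of_summable_integral_norm hF_int hsum
  -- identify the pointwise sum
  have hptwise : ∀ t ∈ Ioi (0 : ℝ), ∑' n : ℕ, F n t =
      (t : ℂ) ^ (s - 1) * Complex.exp (-a * t) / (1 - z * Complex.exp (-(t : ℂ))) := by
    intro t ht
    have hterm : ∀ n : ℕ, F n t =
        ((t : ℂ) ^ (s - 1) * Complex.exp (-a * t)) * (z * Complex.exp (-(t : ℂ))) ^ n := by
      intro n
      rw [hF_def]
      simp only
      rw [mul_pow, ← Complex.exp_nat_mul]
      rw [show (-((n : ℂ) + a) * t) = (-a * t) + (n : ℂ) * (-(t : ℂ)) by ring, Complex.exp_add]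
      ring
    have hlt : ‖z * Complex.exp (-(t : ℂ))‖ < 1 := by
      rw [norm_mul, ← Complex.ofReal_neg, Complex.norm_exp, Complex.ofReal_re]
      calc ‖z‖ * Real.exp (-t) ≤ ‖z‖ * 1 := by
            gcongr; exact Real.exp_le_one_iff.2 (by linarith [mem_Ioi.mp ht])
        _ < 1 := by rw [mul_one]; exact hz
    rw [tsum_congr hterm, tsum_mul_left, tsum_geometric_of_norm_lt_one hlt, div_eq_mul_inv]
  have hIoi := setIntegral_congr_fun (μ := volume) measurableSet_Ioi hptwise
  rw [hIoi] at key
  -- evaluate each integral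
  have hval : ∀ n : ℕ, ∫ t in Set.Ioi (0 : ℝ), F n t =
      Complex.Gamma s * (z ^ n / ((n : ℂ) + a) ^ s) := by
    intro n
    rw [hF_def]
    simp only
    rw [MeasureTheory.integral_mul_const, lerch_gamma_integral s hs _ (hna n)]
    rw [cpow_neg]
    ring
  have hsum2 : HasSum (fun n : ℕ ↦ Complex.Gamma s * (z ^ n / ((n : ℂ) + a) ^ s))
      (∫ t in Set.Ioi (0 : ℝ),
        (t : ℂ) ^ (s - 1) * Complex.exp (-a * t) / (1 - z * Complex.exp (-(t : ℂ)))) := by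
    refine HasSum.congr_fun key fun n ↦ (hval n).symm
  have hΓ : Complex.Gamma s ≠ 0 := Complex.Gamma_ne_zero_of_re_pos hs
  have := (hsum2.mul_left (1 / Complex.Gamma s)).tsum_eq
  rw [← this]
  congr 1
  funext n
  rw [← mul_assoc, one_div, inv_mul_cancel₀ hΓ, one_mul]
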